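/- Let A ∈ ℝ^{n×n}, B ∈ ℝ^{n×m}, C ∈ ℝ^{m×n}, D ∈ ℝ^{m×m}, let P ∈ ℝ^{n×n} be symmetric positive definite and let λ ≥ 0 be such that the symmetric matrix [[AᵀPA − P, AᵀPB], [BᵀPA, BᵀPB]] + λ [[0, Cᵀ], [C, D + Dᵀ]] is negative definite. Then there exist ε ∈ (0,1) and c > 0 such that for every pair of sequences x : ℕ → ℝ^n, u : ℕ → ℝ^m satisfying x_{k+1} = A x_k + B u_k and u_kᵀ (C x_k + D u_k) ≥ 0 for all k, one has x_kᵀ P x_k ≤ (1−ε)^k x_0ᵀ P x_0 and ‖x_k‖² ≤ c (1−ε)^k ‖x_0‖² for all k. -/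

import Mathlib

open Matrix

lemma quad_smul {ι : Type*} [Fintype ι] (Q : Matrix ι ι ℝ) (c : ℝ) (z : ι → ℝ) :
    (c • z) ⬝ᵥ (Q *ᵥ (c • z)) = c ^ 2 * (z ⬝ᵥ (Q *ᵥ z)) := by
  rw [mulVec_smul, smul_dotProduct, dotProduct_smul]
  ring_nf

lemma quad_cont {ι : Type*} [Fintype ι] (Q : Matrix ι ι ℝ) :
    Continuous (fun z : EuclideanSpace ℝ ι => (z : ι → ℝ) ⬝ᵥ (Q *ᵥ z)) := by
  have h : Continuous (fun z : ι → ℝ => z ⬝ᵥ (Q *ᵥ z)) := by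
    unfold dotProduct mulVec
    exact continuous_finset_sum _ fun i _ =>
      (continuous_apply i).mul (continuous_finset_sum _ fun j _ =>
        continuous_const.mul (continuous_apply j))
  exact h.comp (PiLp.continuousLinearEquiv 2 ℝ _).continuous

lemma sq_sum_eq_norm {ι : Type*} [Fintype ι] (z : EuclideanSpace ℝ ι) :
    ∑ i, z i ^ 2 = ‖z‖ ^ 2 := by
  rw [EuclideanSpace.norm_eq, Real.sq_sqrt (by positivity)]
  simp [sq_abs]

lemma quad_lower {ι : Type*} [Fintype ι] [DecidableEq ι] {Q : Matrix ι ι ℝ} (hQ : Q.PosDef) :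
    ∃ α : ℝ, 0 < α ∧ ∀ z : ι → ℝ, α * (∑ i, z i ^ 2) ≤ z ⬝ᵥ (Q *ᵥ z) := by
  cases isEmpty_or_nonempty ι with
  | inl h =>
    refine ⟨1, one_pos, fun z => ?_⟩
    simp [dotProduct]
  | inr h =>
    have hne : (Metric.sphere (0 : EuclideanSpace ℝ ι) 1).Nonempty := by
      refine ⟨EuclideanSpace.single (Classical.arbitrary ι) 1, ?_⟩
      simp [EuclideanSpace.norm_single]
    obtain ⟨w, hw, hmin⟩ := (isCompact_sphere (0 : EuclideanSpace ℝ ι) 1).exists_isMinOn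
      hne (quad_cont Q).continuousOn
    have hw1 : ‖w‖ = 1 := by simpa using hw
    have hwne : (w : ι → ℝ) ≠ 0 := by
      intro h0
      have : ‖w‖ = 0 := by
        have : w = 0 := by simpa using h0
        simp [this]
      simp [hw1] at this
    have hα : 0 < (w : ι → ℝ) ⬝ᵥ (Q *ᵥ w) := by
      have := hQ.re_dotProduct_pos hwne
      simpa using this
    refine ⟨_, hα, fun z => ?_⟩
    by_cases hz : z = 0
    · simp [hz, dotProduct]
    · set z' : EuclideanSpace ℝ ι := WithLp.toLp 2 z with hz'
      have hnz : ‖z'‖ ≠ 0 := by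
        simpa [hz'] using hz
      have hnzpos : 0 < ‖z'‖ := lt_of_le_of_ne (norm_nonneg _) (Ne.symm hnz)
      set v : EuclideanSpace ℝ ι := ‖z'‖⁻¹ • z' with hv
      have hvs : v ∈ Metric.sphere (0 : EuclideanSpace ℝ ι) 1 := by
        simp [hv, norm_smul, abs_of_pos (inv_pos.2 hnzpos), inv_mul_cancel₀ hnz]
      have hquad : (v : ι → ℝ) ⬝ᵥ (Q *ᵥ v) = (‖z'‖⁻¹) ^ 2 * (z ⬝ᵥ (Q *ᵥ z)) :=
        quad_smul Q _ z
      have key : (w : ι → ℝ) ⬝ᵥ (Q *ᵥ w) * ‖z'‖ ^ 2 ≤ z ⬝ᵥ (Q *ᵥ z) := by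
        have h3 : (w : ι → ℝ) ⬝ᵥ (Q *ᵥ w) ≤ (v : ι → ℝ) ⬝ᵥ (Q *ᵥ v) := hmin hvs
        rw [hquad] at h3
        have h4 := mul_le_mul_of_nonneg_right h3 (le_of_lt (by positivity : (0:ℝ) < ‖z'‖ ^ 2))
        calc (w : ι → ℝ) ⬝ᵥ (Q *ᵥ w) * ‖z'‖ ^ 2
            ≤ (‖z'‖⁻¹) ^ 2 * (z ⬝ᵥ (Q *ᵥ z)) * ‖z'‖ ^ 2 := h4
          _ = z ⬝ᵥ (Q *ᵥ z) := by
              field_simp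
      calc (w : ι → ℝ) ⬝ᵥ (Q *ᵥ w) * (∑ i, z i ^ 2)
          = (w : ι → ℝ) ⬝ᵥ (Q *ᵥ w) * ‖z'‖ ^ 2 := by rw [← sq_sum_eq_norm z']
        _ ≤ z ⬝ᵥ (Q *ᵥ z) := key

lemma quad_upper {ι : Type*} [Fintype ι] [DecidableEq ι] (Q : Matrix ι ι ℝ) :
    ∃ β : ℝ, 0 < β ∧ ∀ z : ι → ℝ, z ⬝ᵥ (Q *ᵥ z) ≤ β * (∑ i, z i ^ 2) := by
  cases isEmpty_or_nonempty ι with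
  | inl h =>
    refine ⟨1, one_pos, fun z => ?_⟩
    simp [dotProduct]
  | inr h =>
    have hne : (Metric.sphere (0 : EuclideanSpace ℝ ι) 1).Nonempty := by
      refine ⟨EuclideanSpace.single (Classical.arbitrary ι) 1, ?_⟩
      simp [EuclideanSpace.norm_single]
    obtain ⟨w, hw, hmax⟩ := (isCompact_sphere (0 : EuclideanSpace ℝ ι) 1).exists_isMaxOn
      hne (quad_cont Q).continuousOn
    set M0 : ℝ := (w : ι → ℝ) ⬝ᵥ (Q *ᵥ w) with hM0
    refine ⟨max M0 1, lt_of_lt_of_le one_pos (le_max_right _ _), fun z => ?_⟩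
    by_cases hz : z = 0
    · simp [hz, dotProduct]
    · set z' : EuclideanSpace ℝ ι := WithLp.toLp 2 z with hz'
      have hnz : ‖z'‖ ≠ 0 := by
        simpa [hz'] using hz
      have hnzpos : 0 < ‖z'‖ := lt_of_le_of_ne (norm_nonneg _) (Ne.symm hnz)
      set v : EuclideanSpace ℝ ι := ‖z'‖⁻¹ • z' with hv
      have hvs : v ∈ Metric.sphere (0 : EuclideanSpace ℝ ι) 1 := by
        simp [hv, norm_smul, abs_of_pos (inv_pos.2 hnzpos), inv_mul_cancel₀ hnz]
      have hquad : (v : ι → ℝ) ⬝ᵥ (Q *ᵥ v) = (‖z'‖⁻¹) ^ 2 * (z ⬝ᵥ (Q *ᵥ z)) :=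
        quad_smul Q _ z
      have h3 : (‖z'‖⁻¹) ^ 2 * (z ⬝ᵥ (Q *ᵥ z)) ≤ M0 := by
        rw [← hquad]; exact hmax hvs
      have h4 := mul_le_mul_of_nonneg_right h3 (le_of_lt (by positivity : (0:ℝ) < ‖z'‖ ^ 2))
      have h5 : z ⬝ᵥ (Q *ᵥ z) ≤ M0 * ‖z'‖ ^ 2 := by
        calc z ⬝ᵥ (Q *ᵥ z) = (‖z'‖⁻¹) ^ 2 * (z ⬝ᵥ (Q *ᵥ z)) * ‖z'‖ ^ 2 := by field_simp
          _ ≤ M0 * ‖z'‖ ^ 2 := h4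
      calc z ⬝ᵥ (Q *ᵥ z) ≤ M0 * ‖z'‖ ^ 2 := h5
        _ ≤ max M0 1 * ‖z'‖ ^ 2 := by
            apply mul_le_mul_of_nonneg_right (le_max_left _ _) (by positivity)
        _ = max M0 1 * (∑ i, z i ^ 2) := by rw [← sq_sum_eq_norm z']

lemma quad_fromBlocks {n m : ℕ} (M11 : Matrix (Fin n) (Fin n) ℝ) (M12 : Matrix (Fin n) (Fin m) ℝ)
    (M21 : Matrix (Fin m) (Fin n) ℝ) (M22 : Matrix (Fin m) (Fin m) ℝ)
    (x : Fin n → ℝ) (u : Fin m → ℝ) :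
    Sum.elim x u ⬝ᵥ (fromBlocks M11 M12 M21 M22 *ᵥ Sum.elim x u)
      = x ⬝ᵥ (M11 *ᵥ x) + x ⬝ᵥ (M12 *ᵥ u) + (u ⬝ᵥ (M21 *ᵥ x) + u ⬝ᵥ (M22 *ᵥ u)) := by
  rw [fromBlocks_mulVec, sumElim_dotProduct_sumElim, dotProduct_add, dotProduct_add]
  simp

lemma quad_transpose_mul {p q : ℕ} (A : Matrix (Fin p) (Fin q) ℝ) (x : Fin q → ℝ) (w : Fin p → ℝ) :
    x ⬝ᵥ (Aᵀ *ᵥ w) = (A *ᵥ x) ⬝ᵥ w := by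
  rw [mulVec_transpose, dotProduct_comm, ← dotProduct_mulVec, dotProduct_comm]

theorem passivity_exponential_decay {n m : ℕ}
    (A : Matrix (Fin n) (Fin n) ℝ) (B : Matrix (Fin n) (Fin m) ℝ)
    (C : Matrix (Fin m) (Fin n) ℝ) (D : Matrix (Fin m) (Fin m) ℝ)
    (P : Matrix (Fin n) (Fin n) ℝ) (hP : P.PosDef)
    (lam : ℝ) (hlam : 0 ≤ lam)
    (hLMI : (-(Matrix.fromBlocks (Aᵀ * P * A - P) (Aᵀ * P * B) (Bᵀ * P * A) (Bᵀ * P * B) +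
        lam • Matrix.fromBlocks 0 Cᵀ C (D + Dᵀ))).PosDef) :
    ∃ ε : ℝ, ε ∈ Set.Ioo (0 : ℝ) 1 ∧ ∃ c : ℝ, 0 < c ∧
      ∀ (x : ℕ → Fin n → ℝ) (u : ℕ → Fin m → ℝ),
        (∀ k : ℕ, x (k + 1) = A *ᵥ x k + B *ᵥ u k) →
        (∀ k : ℕ, 0 ≤ u k ⬝ᵥ (C *ᵥ x k + D *ᵥ u k)) →
        ∀ k : ℕ,
          x k ⬝ᵥ (P *ᵥ x k) ≤ (1 - ε) ^ k * (x 0 ⬝ᵥ (P *ᵥ x 0)) ∧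
          (∑ i : Fin n, x k i ^ 2) ≤ c * (1 - ε) ^ k * ∑ i : Fin n, x 0 i ^ 2 := by
  obtain ⟨α, hα, hαle⟩ := quad_lower hLMI
  obtain ⟨γ, hγ, hγle⟩ := quad_lower hP
  obtain ⟨β, hβ, hβle⟩ := quad_upper P
  set ε : ℝ := min (α / β) (1 / 2) with hε
  have hε0 : 0 < ε := lt_min (div_pos hα hβ) (by norm_num)
  have hε1 : ε < 1 := lt_of_le_of_lt (min_le_right _ _) (by norm_num)
  have hεle : ε ≤ α / β := min_le_left _ _
  refine ⟨ε, ⟨hε0, hε1⟩, β / γ, div_pos hβ hγ, fun x u hx hu => ?_⟩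
  -- the one-step decrease
  have step : ∀ k : ℕ, x (k+1) ⬝ᵥ (P *ᵥ x (k+1)) ≤ (1 - ε) * (x k ⬝ᵥ (P *ᵥ x k)) := by
    intro k
    set z : Fin n ⊕ Fin m → ℝ := Sum.elim (x k) (u k) with hz
    set M := Matrix.fromBlocks (Aᵀ * P * A - P) (Aᵀ * P * B) (Bᵀ * P * A) (Bᵀ * P * B) +
        lam • Matrix.fromBlocks 0 Cᵀ C (D + Dᵀ) with hM
    have hquadM : z ⬝ᵥ (M *ᵥ z)
        = (x (k+1) ⬝ᵥ (P *ᵥ x (k+1)) - x k ⬝ᵥ (P *ᵥ x k))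
          + lam * (2 * (u k ⬝ᵥ (C *ᵥ x k + D *ᵥ u k))) := by
      rw [hM, add_mulVec, dotProduct_add, smul_mulVec, dotProduct_smul]
      rw [quad_fromBlocks, quad_fromBlocks]
      have e1 : x k ⬝ᵥ ((Aᵀ * P * A - P) *ᵥ x k)
          = (A *ᵥ x k) ⬝ᵥ (P *ᵥ (A *ᵥ x k)) - x k ⬝ᵥ (P *ᵥ x k) := by
        rw [sub_mulVec, dotProduct_sub, Matrix.mul_assoc, ← mulVec_mulVec, quad_transpose_mul,
          mulVec_mulVec]
      have e2 : x k ⬝ᵥ ((Aᵀ * P * B) *ᵥ u k) = (A *ᵥ x k) ⬝ᵥ (P *ᵥ (B *ᵥ u k)) := by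
        rw [Matrix.mul_assoc, ← mulVec_mulVec, quad_transpose_mul, mulVec_mulVec]
      have e3 : u k ⬝ᵥ ((Bᵀ * P * A) *ᵥ x k) = (B *ᵥ u k) ⬝ᵥ (P *ᵥ (A *ᵥ x k)) := by
        rw [Matrix.mul_assoc, ← mulVec_mulVec, quad_transpose_mul, mulVec_mulVec]
      have e4 : u k ⬝ᵥ ((Bᵀ * P * B) *ᵥ u k) = (B *ᵥ u k) ⬝ᵥ (P *ᵥ (B *ᵥ u k)) := by
        rw [Matrix.mul_assoc, ← mulVec_mulVec, quad_transpose_mul, mulVec_mulVec]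
      have e5 : x k ⬝ᵥ (Cᵀ *ᵥ u k) = u k ⬝ᵥ (C *ᵥ x k) := by
        rw [quad_transpose_mul, dotProduct_comm]
      have e6 : u k ⬝ᵥ ((D + Dᵀ) *ᵥ u k) = 2 * (u k ⬝ᵥ (D *ᵥ u k)) := by
        rw [add_mulVec, dotProduct_add, quad_transpose_mul, dotProduct_comm (D *ᵥ u k)]
        ring
      have e7 : x (k+1) ⬝ᵥ (P *ᵥ x (k+1))
          = (A *ᵥ x k) ⬝ᵥ (P *ᵥ (A *ᵥ x k)) + (A *ᵥ x k) ⬝ᵥ (P *ᵥ (B *ᵥ u k))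
            + ((B *ᵥ u k) ⬝ᵥ (P *ᵥ (A *ᵥ x k)) + (B *ᵥ u k) ⬝ᵥ (P *ᵥ (B *ᵥ u k))) := by
        rw [hx k, mulVec_add, dotProduct_add, add_dotProduct, add_dotProduct]
        ring
      rw [e1, e2, e3, e4, e5, e6, dotProduct_add, e7]
      simp [Matrix.zero_mulVec, dotProduct_zero]
      ring
    have hMneg : z ⬝ᵥ (M *ᵥ z) ≤ -(α * ∑ i, z i ^ 2) := by
      have := hαle z
      rw [neg_mulVec, dotProduct_neg] at this
      linarith
    have hsum : (∑ i : Fin n, x k i ^ 2) ≤ ∑ i, z i ^ 2 := by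
      rw [Fintype.sum_sum_type]
      have h0 : (0:ℝ) ≤ ∑ i : Fin m, u k i ^ 2 := by positivity
      simp only [hz, Sum.elim_inl, Sum.elim_inr]
      linarith
    have hpass := hu k
    have hVk : 0 ≤ x k ⬝ᵥ (P *ᵥ x k) := by
      have := hγle (x k)
      have h0 : (0:ℝ) ≤ γ * ∑ i, x k i ^ 2 := by positivity
      linarith
    have hVub := hβle (x k)
    -- V(k+1) - V(k) ≤ -α ∑ x_k² ≤ -(α/β) V(k)
    have key : x (k+1) ⬝ᵥ (P *ᵥ x (k+1)) - x k ⬝ᵥ (P *ᵥ x k) ≤ -(α * ∑ i : Fin n, x k i ^ 2) := by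
      have h1 : x (k+1) ⬝ᵥ (P *ᵥ x (k+1)) - x k ⬝ᵥ (P *ᵥ x k) ≤ z ⬝ᵥ (M *ᵥ z) := by
        rw [hquadM]
        nlinarith [mul_nonneg hlam hpass]
      have h2 : -(α * ∑ i, z i ^ 2) ≤ -(α * ∑ i : Fin n, x k i ^ 2) := by
        have := mul_le_mul_of_nonneg_left hsum (le_of_lt hα)
        linarith
      linarith
    have hdiv : (α / β) * (x k ⬝ᵥ (P *ᵥ x k)) ≤ α * ∑ i : Fin n, x k i ^ 2 := by
      rw [div_mul_eq_mul_div, div_le_iff₀ hβ]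
      calc α * (x k ⬝ᵥ (P *ᵥ x k)) ≤ α * (β * ∑ i : Fin n, x k i ^ 2) :=
            mul_le_mul_of_nonneg_left hVub (le_of_lt hα)
        _ = α * (∑ i : Fin n, x k i ^ 2) * β := by ring
    have hεV : ε * (x k ⬝ᵥ (P *ᵥ x k)) ≤ (α / β) * (x k ⬝ᵥ (P *ᵥ x k)) :=
      mul_le_mul_of_nonneg_right hεle hVk
    nlinarith [key, hdiv, hεV]
  have hVnonneg : ∀ k, 0 ≤ x k ⬝ᵥ (P *ᵥ x k) := by
    intro k
    have := hγle (x k)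
    have h0 : (0:ℝ) ≤ γ * ∑ i, x k i ^ 2 := by positivity
    linarith
  have h1ε : (0:ℝ) ≤ 1 - ε := by linarith
  have decay : ∀ k : ℕ, x k ⬝ᵥ (P *ᵥ x k) ≤ (1 - ε) ^ k * (x 0 ⬝ᵥ (P *ᵥ x 0)) := by
    intro k
    induction k with
    | zero => simp
    | succ k ih =>
      calc x (k+1) ⬝ᵥ (P *ᵥ x (k+1)) ≤ (1 - ε) * (x k ⬝ᵥ (P *ᵥ x k)) := step k
        _ ≤ (1 - ε) * ((1 - ε) ^ k * (x 0 ⬝ᵥ (P *ᵥ x 0))) :=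
            mul_le_mul_of_nonneg_left ih h1ε
        _ = (1 - ε) ^ (k+1) * (x 0 ⬝ᵥ (P *ᵥ x 0)) := by ring
  intro k
  refine ⟨decay k, ?_⟩
  have h1 : γ * (∑ i : Fin n, x k i ^ 2) ≤ x k ⬝ᵥ (P *ᵥ x k) := hγle (x k)
  have h2 : x 0 ⬝ᵥ (P *ᵥ x 0) ≤ β * ∑ i : Fin n, x 0 i ^ 2 := hβle (x 0)
  have h3 : (0:ℝ) ≤ (1 - ε) ^ k := pow_nonneg h1ε k
  have h4 : (1 - ε) ^ k * (x 0 ⬝ᵥ (P *ᵥ x 0)) ≤ (1 - ε) ^ k * (β * ∑ i : Fin n, x 0 i ^ 2) :=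
    mul_le_mul_of_nonneg_left h2 h3
  have h5 : γ * (∑ i : Fin n, x k i ^ 2) ≤ (1 - ε) ^ k * (β * ∑ i : Fin n, x 0 i ^ 2) :=
    le_trans (le_trans h1 (decay k)) h4
  rw [div_mul_eq_mul_div, div_mul_eq_mul_div, le_div_iff₀ hγ]
  calc (∑ i : Fin n, x k i ^ 2) * γ = γ * (∑ i : Fin n, x k i ^ 2) := by ring
    _ ≤ (1 - ε) ^ k * (β * ∑ i : Fin n, x 0 i ^ 2) := h5
    _ = β * (1 - ε) ^ k * ∑ i : Fin n, x 0 i ^ 2 := by ring
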